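/- Let p be an odd prime, m = p−1, and let b, b' ∈ {0,...,p−1} with b ≠ b' and b + b' = (p−1)/2. For each i ∈ {1,...,m} and each j ∈ {1,...,m}, Ẽ_b(i,j) + Ẽ_{b'}(p−i, j) = p; that is, the entrywise sum of the i-th row of Ẽ_b and the (p−i)-th row of Ẽ_{b'} is the constant row with all entries equal to p. -/

import Mathlib

/-- The Williams transformation on `{0,…,p-1}`. -/
def Wtr (p x : ℕ) : ℕ :=
  if 2 * x < p then 2 * x else 2 * (p - x) - 1

/-- The leave-one-out Williams-transformed design `Ẽ_b`. -/
def Etil (p b i j : ℕ) : ℕ :=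
  let x := Wtr p ((i * j + b) % p)
  if x < Wtr p b then x + 1 else x

lemma wtr_add (p u v : ℕ) (hp : Odd p) (hu : u < p) (hv : v < p)
    (h : u + v = (p - 1) / 2 ∨ u + v = (p - 1) / 2 + p) :
    Wtr p u + Wtr p v = p - 1 := by
  obtain ⟨q, hq⟩ := hp
  unfold Wtr
  split <;> split <;> omega

lemma wtr_inj (p u v : ℕ) (hp : Odd p) (hu : u < p) (hv : v < p)
    (h : Wtr p u = Wtr p v) : u = v := by
  obtain ⟨q, hq⟩ := hp
  unfold Wtr at h
  split at h <;> split at h <;> omega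

/-- for an odd prime `p`, `m = p - 1`, and distinct `b, b' ∈ {0,…,p-1}`
with `b + b' = (p-1)/2`, for each `i, j ∈ {1,…,m}` we have
`Ẽ_b(i,j) + Ẽ_{b'}(p-i,j) = p`. -/
theorem stmt_9 (p : ℕ) (hp : p.Prime) (hodd : Odd p)
    (b b' : ℕ) (hb : b < p) (hb' : b' < p) (hne : b ≠ b')
    (hsum : b + b' = (p - 1) / 2) :
    ∀ i ∈ Finset.Icc 1 (p - 1), ∀ j ∈ Finset.Icc 1 (p - 1),
      Etil p b i j + Etil p b' (p - i) j = p := by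
  intro i hi j hj
  simp only [Finset.mem_Icc] at hi hj
  have hppos : 0 < p := hp.pos
  have hp2 : 2 < p := by
    have h1 := hp.two_le
    have h2 := Nat.odd_iff.mp hodd
    omega
  set u := (i * j + b) % p with hu
  set v := ((p - i) * j + b') % p with hv
  have hup : u < p := Nat.mod_lt _ hppos
  have hvp : v < p := Nat.mod_lt _ hppos
  -- congruence: u + v ≡ (p-1)/2 mod p
  have key : (u + v) % p = (p - 1) / 2 := by
    have h1 : i * j + b + ((p - i) * j + b') = p * j + (b + b') := by
      have h2 : i * j + (p - i) * j = p * j := by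
        rw [← Nat.add_mul]
        congr 1
        omega
      omega
    rw [hu, hv, ← Nat.add_mod, h1, hsum, Nat.mul_add_mod,
      Nat.mod_eq_of_lt (by omega)]
  have hsum2 : u + v = (p - 1) / 2 ∨ u + v = (p - 1) / 2 + p := by
    rcases Nat.lt_or_ge (u + v) p with h | h
    · left; rwa [Nat.mod_eq_of_lt h] at key
    · right
      rw [Nat.mod_eq_sub_mod h, Nat.mod_eq_of_lt (by omega)] at key
      omega
  -- u ≠ b
  have hub : u ≠ b := by
    intro h
    have hmod : (i * j + b) % p = b % p := by
      rw [← hu, h, Nat.mod_eq_of_lt hb]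
    have h2 : i * j + b ≡ 0 + b [MOD p] := by
      show (i * j + b) % p = (0 + b) % p
      rw [zero_add]; exact hmod
    have h3 : i * j ≡ 0 [MOD p] := h2.add_right_cancel' b
    have hdvd : p ∣ i * j := (Nat.modEq_zero_iff_dvd).mp h3
    rcases (Nat.Prime.dvd_mul hp).mp hdvd with h4 | h4 <;>
      have := Nat.le_of_dvd (by omega) h4 <;> omega
  have hWuv : Wtr p u + Wtr p v = p - 1 := wtr_add p u v hodd hup hvp hsum2
  have hWbb : Wtr p b + Wtr p b' = p - 1 :=
    wtr_add p b b' hodd hb hb' (Or.inl hsum)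
  have hWub : Wtr p u ≠ Wtr p b := fun h => hub (wtr_inj p u b hodd hup hb h)
  simp only [Etil, ← hu, ← hv]
  split <;> split <;> omega
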